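/- For every A ∈ ℝ and B ≥ 0 one has 𝓘₂²(A,B) ≥ 0, i.e. ∫₀^π cos(2θ) φ₂(A + B cos θ) dθ ≥ 0, with equality when B = 0. -/

import Mathlib

open MeasureTheory Set

/-- The Fermi integral of order `s`: `φ_s(x) = (1/Γ(s)) ∫₀^∞ t^{s-1}/(e^{t-x}+1) dt`. -/
noncomputable def fermi (s x : ℝ) : ℝ :=
  (1 / Real.Gamma s) * ∫ t in Set.Ioi (0 : ℝ), t ^ (s - 1) / (Real.exp (t - x) + 1)

/-- `𝓘_N^s(A,B) = (1/π) ∫₀^π cos(Nθ) φ_s(A + B cos θ) dθ`. -/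
noncomputable def calI (N : ℕ) (s A B : ℝ) : ℝ :=
  (1 / Real.pi) * ∫ θ in (0 : ℝ)..Real.pi, Real.cos (N * θ) * fermi s (A + B * Real.cos θ)

namespace FermiAux

open Real Filter

lemma exp_div_identity (y : ℝ) : Real.exp y / (1 + Real.exp y) = 1 / (Real.exp (-y) + 1) := by
  have h1 : (0:ℝ) < 1 + Real.exp y := by positivity
  have h2 : (0:ℝ) < Real.exp (-y) + 1 := by positivity
  have h3 : Real.exp (-y) * Real.exp y = 1 := by rw [← Real.exp_add]; simp
  field_simp
  nlinarith [h3]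

/-- integrability of the Fermi integrand for `s = 2` -/
lemma integrable_num (x : ℝ) :
    IntegrableOn (fun t : ℝ => t / (Real.exp (t - x) + 1)) (Ioi 0) := by
  have h := Real.GammaIntegral_convergent (by norm_num : (0:ℝ) < 2)
  have h2 : IntegrableOn
      (fun t : ℝ => Real.exp x * (Real.exp (-t) * t ^ ((2:ℝ) - 1))) (Ioi 0) :=
    h.const_mul _
  refine h2.mono' ?_ ?_
  · exact (continuous_id.div
      ((Real.continuous_exp.comp (continuous_id.sub continuous_const)).add continuous_const)
      (fun t => by show Real.exp (t - x) + 1 ≠ 0; positivity)).aestronglyMeasurable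
  · filter_upwards [ae_restrict_mem measurableSet_Ioi] with t ht
    have ht' : (0:ℝ) < t := ht
    have hden : (0:ℝ) < Real.exp (t - x) + 1 := by positivity
    have key : Real.exp x * (Real.exp (-t) * t ^ ((2:ℝ)-1)) = t / Real.exp (t - x) := by
      rw [show ((2:ℝ) - 1) = 1 by norm_num, Real.rpow_one, Real.exp_sub, Real.exp_neg]
      field_simp
    rw [key, Real.norm_eq_abs, abs_of_nonneg (by positivity)]
    exact div_le_div_of_nonneg_left ht'.le (Real.exp_pos _) (by linarith)

lemma integrable_log (x : ℝ) :
    IntegrableOn (fun t : ℝ => Real.log (1 + Real.exp (x - t))) (Ioi 0) := by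
  have h : IntegrableOn (fun t : ℝ => Real.exp x * Real.exp (-1 * t)) (Ioi 0) :=
    (exp_neg_integrableOn_Ioi 0 one_pos).const_mul _
  refine h.mono' ?_ ?_
  · refine Continuous.aestronglyMeasurable ?_
    have hc : Continuous fun t : ℝ => 1 + Real.exp (x - t) :=
      continuous_const.add (Real.continuous_exp.comp (continuous_const.sub continuous_id))
    exact hc.log (fun t => by positivity)
  · filter_upwards [ae_restrict_mem measurableSet_Ioi] with t _
    have he : (0:ℝ) < Real.exp (x - t) := Real.exp_pos _
    rw [Real.norm_eq_abs, abs_of_nonneg (Real.log_nonneg (by linarith))]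
    have hle : Real.log (1 + Real.exp (x - t)) ≤ Real.exp (x - t) := by
      have := Real.log_le_sub_one_of_pos (show (0:ℝ) < 1 + Real.exp (x - t) by linarith)
      linarith
    calc Real.log (1 + Real.exp (x - t)) ≤ Real.exp (x - t) := hle
      _ = Real.exp x * Real.exp (-1 * t) := by
          rw [← Real.exp_add, show x + -1 * t = x - t from by ring]

/-- integration by parts representation -/
lemma fermi_eq (x : ℝ) :
    fermi 2 x = ∫ t in Ioi (0:ℝ), Real.log (1 + Real.exp (x - t)) := by
  have hΓ : Real.Gamma 2 = 1 := Real.Gamma_two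
  have hrw : fermi 2 x = ∫ t in Ioi (0:ℝ), t / (Real.exp (t - x) + 1) := by
    rw [fermi, hΓ]
    norm_num [show ((2:ℝ) - 1) = 1 from by norm_num, Real.rpow_one]
  rw [hrw]
  -- integration by parts: F t = -(t * log(1+exp(x-t)))
  set F : ℝ → ℝ := fun t => -(t * Real.log (1 + Real.exp (x - t))) with hF
  set f' : ℝ → ℝ := fun t => t / (Real.exp (t - x) + 1) - Real.log (1 + Real.exp (x - t))
    with hf'
  have hderiv : ∀ t : ℝ, HasDerivAt F (f' t) t := by
    intro t
    have h1 : HasDerivAt (fun y : ℝ => x - y) (-1) t := (hasDerivAt_id t).const_sub x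
    have h2 : HasDerivAt (fun y : ℝ => Real.exp (x - y)) (Real.exp (x - t) * (-1)) t := h1.exp
    have h3 : HasDerivAt (fun y : ℝ => 1 + Real.exp (x - y)) (Real.exp (x - t) * (-1)) t :=
      h2.const_add 1
    have hne : (1 : ℝ) + Real.exp (x - t) ≠ 0 := by positivity
    have h4 : HasDerivAt (fun y : ℝ => Real.log (1 + Real.exp (x - y)))
        (Real.exp (x - t) * (-1) / (1 + Real.exp (x - t))) t := h3.log hne
    have h5 := ((hasDerivAt_id t).mul h4).neg
    convert h5 using 1
    case e'_4 => rfl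
    case e'_5 => rfl
    case e'_8 => rfl
    have hid : Real.exp (x - t) / (1 + Real.exp (x - t)) = 1 / (Real.exp (t - x) + 1) := by
      have h := exp_div_identity (x - t)
      rwa [neg_sub] at h
    rw [hf']
    simp only [id_eq, one_mul]
    have hrw2 : t * (Real.exp (x - t) * -1 / (1 + Real.exp (x - t)))
        = -(t * (Real.exp (x - t) / (1 + Real.exp (x - t)))) := by ring
    rw [hrw2, hid]
    ring
  have htend : Tendsto F atTop (nhds 0) := by
    rw [show (0:ℝ) = -0 by norm_num]
    apply Tendsto.neg
    apply squeeze_zero' (g := fun t : ℝ => Real.exp x * (t ^ 1 * Real.exp (-t)))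
    · filter_upwards [Ioi_mem_atTop (0:ℝ)] with t ht
      have ht' : (0:ℝ) < t := ht
      exact mul_nonneg ht'.le (Real.log_nonneg (by nlinarith [Real.exp_pos (x - t)]))
    · filter_upwards [Ioi_mem_atTop (0:ℝ)] with t ht
      have ht' : (0:ℝ) < t := ht
      have hle : Real.log (1 + Real.exp (x - t)) ≤ Real.exp (x - t) := by
        have := Real.log_le_sub_one_of_pos (show (0:ℝ) < 1 + Real.exp (x - t) by positivity)
        linarith
      have : t * Real.log (1 + Real.exp (x - t)) ≤ t * Real.exp (x - t) :=
        mul_le_mul_of_nonneg_left hle ht'.le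
      calc t * Real.log (1 + Real.exp (x - t)) ≤ t * Real.exp (x - t) := this
        _ = Real.exp x * (t ^ 1 * Real.exp (-t)) := by
            rw [pow_one, show x - t = x + -t from by ring, Real.exp_add]; ring
    · rw [show (0:ℝ) = Real.exp x * 0 by ring]
      exact (tendsto_pow_mul_exp_neg_atTop_nhds_zero 1).const_mul _
  have hint : IntegrableOn f' (Ioi 0) := (integrable_num x).sub (integrable_log x)
  have key := integral_Ioi_of_hasDerivAt_of_tendsto' (a := 0)
    (fun t _ => hderiv t) hint htend
  have hF0 : F 0 = 0 := by simp [hF]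
  rw [hF0, sub_zero] at key
  have hsplit : ∫ t in Ioi (0:ℝ), f' t
      = (∫ t in Ioi (0:ℝ), t / (Real.exp (t - x) + 1))
        - ∫ t in Ioi (0:ℝ), Real.log (1 + Real.exp (x - t)) :=
    integral_sub (integrable_num x) (integrable_log x)
  rw [key] at hsplit
  linarith [hsplit]

lemma fermi_nonneg (x : ℝ) : 0 ≤ fermi 2 x := by
  rw [fermi_eq]
  apply setIntegral_nonneg measurableSet_Ioi
  intro t _
  exact Real.log_nonneg (by nlinarith [Real.exp_pos (x - t)])

lemma fermi_mono : Monotone (fermi 2) := by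
  intro x y hxy
  rw [fermi_eq, fermi_eq]
  apply integral_mono (integrable_log x) (integrable_log y)
  intro t
  have := Real.exp_le_exp.2 (sub_le_sub_right hxy t)
  have h1 : (0:ℝ) < 1 + Real.exp (x - t) := by positivity
  exact Real.log_le_log h1 (by linarith)

/-- pointwise cosh-type inequality -/
lemma pointwise_ineq (m : ℝ) {a b : ℝ} (ha : 0 ≤ a) (hab : a ≤ b) :
    Real.log (1 + Real.exp (m + a)) + Real.log (1 + Real.exp (m - a))
      ≤ Real.log (1 + Real.exp (m + b)) + Real.log (1 + Real.exp (m - b)) := by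
  have p1 : (0:ℝ) < 1 + Real.exp (m + a) := by positivity
  have p2 : (0:ℝ) < 1 + Real.exp (m - a) := by positivity
  have p3 : (0:ℝ) < 1 + Real.exp (m + b) := by positivity
  have p4 : (0:ℝ) < 1 + Real.exp (m - b) := by positivity
  rw [← Real.log_mul (ne_of_gt p1) (ne_of_gt p2), ← Real.log_mul (ne_of_gt p3) (ne_of_gt p4)]
  apply Real.log_le_log (by positivity)
  -- reduce to cosh monotonicity
  have hch : Real.exp a + Real.exp (-a) ≤ Real.exp b + Real.exp (-b) := by
    have h1 : Real.exp a ≤ Real.exp b := Real.exp_le_exp.2 hab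
    have h2 : Real.exp (-(a + b)) ≤ 1 := Real.exp_le_one_iff.2 (by linarith)
    have h3 : Real.exp b * Real.exp (-(a + b)) = Real.exp (-a) := by
      rw [← Real.exp_add, show b + -(a + b) = -a from by ring]
    have h4 : Real.exp a * Real.exp (-(a + b)) = Real.exp (-b) := by
      rw [← Real.exp_add, show a + -(a + b) = -b from by ring]
    nlinarith [Real.exp_pos (-(a + b))]
  have e1 : Real.exp (m + a) = Real.exp m * Real.exp a := Real.exp_add m a
  have e2 : Real.exp (m - a) = Real.exp m * Real.exp (-a) := by
    rw [← Real.exp_add, show m + -a = m - a from by ring]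
  have e3 : Real.exp (m + b) = Real.exp m * Real.exp b := Real.exp_add m b
  have e4 : Real.exp (m - b) = Real.exp m * Real.exp (-b) := by
    rw [← Real.exp_add, show m + -b = m - b from by ring]
  have q1 : Real.exp a * Real.exp (-a) = 1 := by rw [← Real.exp_add]; simp
  have q2 : Real.exp b * Real.exp (-b) = 1 := by rw [← Real.exp_add]; simp
  have r1 : Real.exp m * Real.exp a * (Real.exp m * Real.exp (-a))
      = Real.exp m * Real.exp m := by rw [mul_mul_mul_comm, q1, mul_one]
  have r2 : Real.exp m * Real.exp b * (Real.exp m * Real.exp (-b))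
      = Real.exp m * Real.exp m := by rw [mul_mul_mul_comm, q2, mul_one]
  rw [e1, e2, e3, e4]
  nlinarith [mul_le_mul_of_nonneg_left hch (Real.exp_pos m).le, r1, r2]

/-- key inequality: `Φ(A+a)+Φ(A-a) ≤ Φ(A+b)+Φ(A-b)` for `0 ≤ a ≤ b` -/
lemma key_ineq (A : ℝ) {a b : ℝ} (ha : 0 ≤ a) (hab : a ≤ b) :
    fermi 2 (A + a) + fermi 2 (A - a) ≤ fermi 2 (A + b) + fermi 2 (A - b) := by
  rw [fermi_eq, fermi_eq, fermi_eq, fermi_eq,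
    ← integral_add (integrable_log _) (integrable_log _),
    ← integral_add (integrable_log _) (integrable_log _)]
  apply integral_mono ((integrable_log _).add (integrable_log _))
    ((integrable_log _).add (integrable_log _))
  intro t
  simp only [Pi.add_apply]
  have h := pointwise_ineq (A - t) ha hab
  have e1 : A - t + a = A + a - t := by ring
  have e2 : A - t - a = A - a - t := by ring
  have e3 : A - t + b = A + b - t := by ring
  have e4 : A - t - b = A - b - t := by ring
  rw [e1, e2, e3, e4] at h
  exact h

lemma fermi_measurable : Measurable (fermi 2) := fermi_mono.measurable

end FermiAux

open FermiAux Real Filter in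
/-- `𝓘₂²(A,B) ≥ 0`, i.e. `∫₀^π cos(2θ) φ₂(A + B cos θ) dθ ≥ 0`, with equality at `B = 0`. -/
theorem calI_two_nonneg (A B : ℝ) (hB : 0 ≤ B) :
    0 ≤ calI 2 2 A B ∧
    0 ≤ ∫ θ in (0 : ℝ)..Real.pi, Real.cos (2 * θ) * fermi 2 (A + B * Real.cos θ) ∧
    (B = 0 → calI 2 2 A B = 0) := by
  set g : ℝ → ℝ := fun θ => Real.cos (2 * θ) * fermi 2 (A + B * Real.cos θ) with hg
  -- boundedness/measurability infrastructure
  have hbound : ∀ θ : ℝ, |g θ| ≤ fermi 2 (A + B) := by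
    intro θ
    rw [hg, abs_mul]
    have h1 : |Real.cos (2 * θ)| ≤ 1 := Real.abs_cos_le_one _
    have h2 : |fermi 2 (A + B * Real.cos θ)| = fermi 2 (A + B * Real.cos θ) :=
      abs_of_nonneg (fermi_nonneg _)
    have h3 : fermi 2 (A + B * Real.cos θ) ≤ fermi 2 (A + B) := by
      apply fermi_mono
      have := Real.cos_le_one θ
      nlinarith
    calc |Real.cos (2 * θ)| * |fermi 2 (A + B * Real.cos θ)|
        ≤ 1 * |fermi 2 (A + B * Real.cos θ)| :=
          mul_le_mul_of_nonneg_right h1 (abs_nonneg _)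
      _ = fermi 2 (A + B * Real.cos θ) := by rw [one_mul, h2]
      _ ≤ fermi 2 (A + B) := h3
  have hmeas : Measurable g := by
    apply Measurable.mul
    · exact (Real.continuous_cos.comp (continuous_const.mul continuous_id)).measurable
    · exact fermi_measurable.comp
        ((continuous_const.add (continuous_const.mul Real.continuous_cos)).measurable)
  have hII : ∀ (f : ℝ → ℝ), Measurable f → (∀ θ, |f θ| ≤ fermi 2 (A + B)) →
      ∀ u v : ℝ, IntervalIntegrable f volume u v := by
    intro f hf hb u v
    rw [intervalIntegrable_iff]
    refine Measure.integrableOn_of_bounded (M := fermi 2 (A + B)) ?_ hf.aestronglyMeasurable ?_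
    · exact (measure_Ioc_lt_top).ne
    · filter_upwards with θ
      simpa [Real.norm_eq_abs] using hb θ
  have hIIg := hII g hmeas hbound
  have hmeas1 : Measurable fun θ => g (Real.pi - θ) :=
    hmeas.comp (measurable_const.sub measurable_id)
  have hmeas2 : Measurable fun θ => g (Real.pi / 2 - θ) :=
    hmeas.comp (measurable_const.sub measurable_id)
  have hmeas3 : Measurable fun θ => g (Real.pi / 2 + θ) :=
    hmeas.comp (measurable_const.add measurable_id)
  have hII1 := hII _ hmeas1 (fun θ => hbound _)
  have hII2 := hII _ hmeas2 (fun θ => hbound _)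
  have hII3 := hII _ hmeas3 (fun θ => hbound _)
  have pi_pos := Real.pi_pos
  -- step 1: fold at π
  have step1 : (∫ θ in (0:ℝ)..Real.pi, g θ)
      = ∫ θ in (0:ℝ)..(Real.pi/2), (g θ + g (Real.pi - θ)) := by
    have hsplit := intervalIntegral.integral_add_adjacent_intervals
      (hIIg 0 (Real.pi/2)) (hIIg (Real.pi/2) Real.pi)
    have hrefl : (∫ θ in (0:ℝ)..(Real.pi/2), g (Real.pi - θ))
        = ∫ θ in (Real.pi/2)..Real.pi, g θ := by
      rw [intervalIntegral.integral_comp_sub_left g Real.pi,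
        show Real.pi - Real.pi/2 = Real.pi/2 from by ring]
      norm_num
    rw [intervalIntegral.integral_add (hIIg 0 (Real.pi/2)) (hII1 0 (Real.pi/2)), hrefl, hsplit]
  -- step 2: fold at π/2
  have step2 : (∫ θ in (0:ℝ)..(Real.pi/2), (g θ + g (Real.pi - θ)))
      = ∫ θ in (0:ℝ)..(Real.pi/4),
          ((g θ + g (Real.pi - θ)) + (g (Real.pi/2 - θ) + g (Real.pi/2 + θ))) := by
    set h : ℝ → ℝ := fun θ => g θ + g (Real.pi - θ) with hh
    have hIIh : ∀ u v : ℝ, IntervalIntegrable h volume u v := fun u v =>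
      (hIIg u v).add (hII1 u v)
    have hIIh2 : ∀ u v : ℝ, IntervalIntegrable (fun θ => h (Real.pi/2 - θ)) volume u v := by
      intro u v
      have : (fun θ => h (Real.pi/2 - θ))
          = fun θ => g (Real.pi/2 - θ) + g (Real.pi/2 + θ) := by
        funext θ
        rw [hh]
        congr 2
        ring
      rw [this]
      exact (hII2 u v).add (hII3 u v)
    have hsplit := intervalIntegral.integral_add_adjacent_intervals
      (hIIh 0 (Real.pi/4)) (hIIh (Real.pi/4) (Real.pi/2))
    have hrefl : (∫ θ in (0:ℝ)..(Real.pi/4), h (Real.pi/2 - θ))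
        = ∫ θ in (Real.pi/4)..(Real.pi/2), h θ := by
      rw [intervalIntegral.integral_comp_sub_left h (Real.pi/2),
        show Real.pi/2 - Real.pi/4 = Real.pi/4 from by ring]
      norm_num
    have heq : (∫ θ in (0:ℝ)..(Real.pi/4),
          ((g θ + g (Real.pi - θ)) + (g (Real.pi/2 - θ) + g (Real.pi/2 + θ))))
        = (∫ θ in (0:ℝ)..(Real.pi/4), h θ) + ∫ θ in (0:ℝ)..(Real.pi/4), h (Real.pi/2 - θ) := by
      rw [← intervalIntegral.integral_add (hIIh 0 (Real.pi/4)) (hIIh2 0 (Real.pi/4))]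
      apply intervalIntegral.integral_congr
      intro θ _
      simp only [hh]
      congr 2
      ring
    rw [heq, hrefl, hsplit]
  -- pointwise nonnegativity on [0, π/4]
  have hptwise : ∀ θ ∈ Set.Icc (0:ℝ) (Real.pi/4),
      0 ≤ (g θ + g (Real.pi - θ)) + (g (Real.pi/2 - θ) + g (Real.pi/2 + θ)) := by
    intro θ hθ
    obtain ⟨hθ0, hθ4⟩ := hθ
    have hcos2 : Real.cos (2 * (Real.pi - θ)) = Real.cos (2 * θ) := by
      rw [show 2 * (Real.pi - θ) = 2 * Real.pi - 2 * θ by ring, Real.cos_sub]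
      simp
    have hcosπ : Real.cos (Real.pi - θ) = -Real.cos θ := Real.cos_pi_sub θ
    have hcos3 : Real.cos (2 * (Real.pi/2 - θ)) = -Real.cos (2 * θ) := by
      rw [show 2 * (Real.pi/2 - θ) = Real.pi - 2 * θ by ring, Real.cos_pi_sub]
    have hcos4 : Real.cos (Real.pi/2 - θ) = Real.sin θ := Real.cos_pi_div_two_sub θ
    have hcos5 : Real.cos (2 * (Real.pi/2 + θ)) = -Real.cos (2 * θ) := by
      rw [show 2 * (Real.pi/2 + θ) = Real.pi + 2 * θ by ring, Real.cos_add]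
      simp
    have hcos6 : Real.cos (Real.pi/2 + θ) = -Real.sin θ := by
      rw [Real.cos_add]
      simp
    have hc2 : 0 ≤ Real.cos (2 * θ) := by
      apply Real.cos_nonneg_of_mem_Icc
      constructor <;> [linarith; linarith]
    have hsin0 : 0 ≤ Real.sin θ := Real.sin_nonneg_of_nonneg_of_le_pi hθ0 (by linarith)
    have hsc : Real.sin θ ≤ Real.cos θ := by
      have h1 : Real.sin θ ≤ Real.sin (Real.pi/4) :=
        Real.sin_le_sin_of_le_of_le_pi_div_two (by linarith) (by linarith) hθ4
      have h2 : Real.cos (Real.pi/4) ≤ Real.cos θ :=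
        Real.cos_le_cos_of_nonneg_of_le_pi hθ0 (by linarith) hθ4
      rw [Real.sin_pi_div_four] at h1
      rw [Real.cos_pi_div_four] at h2
      linarith
    have hkey := key_ineq A (mul_nonneg hB hsin0)
      (mul_le_mul_of_nonneg_left hsc hB)
    rw [hg]
    simp only [hcos2, hcosπ, hcos3, hcos4, hcos5, hcos6]
    have e1 : A + B * -Real.cos θ = A - B * Real.cos θ := by ring
    have e2 : A + B * -Real.sin θ = A - B * Real.sin θ := by ring
    rw [e1, e2]
    have expand : Real.cos (2*θ) * fermi 2 (A + B * Real.cos θ)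
        + Real.cos (2*θ) * fermi 2 (A - B * Real.cos θ)
        + (-Real.cos (2*θ) * fermi 2 (A + B * Real.sin θ)
          + -Real.cos (2*θ) * fermi 2 (A - B * Real.sin θ))
        = Real.cos (2*θ) * ((fermi 2 (A + B * Real.cos θ) + fermi 2 (A - B * Real.cos θ))
          - (fermi 2 (A + B * Real.sin θ) + fermi 2 (A - B * Real.sin θ))) := by ring
    rw [expand]
    exact mul_nonneg hc2 (by linarith [hkey])
  have hmain : 0 ≤ ∫ θ in (0:ℝ)..Real.pi, g θ := by
    rw [step1, step2]
    apply intervalIntegral.integral_nonneg (by positivity)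
    intro θ hθ
    exact hptwise θ hθ
  have hcast : calI 2 2 A B = (1 / Real.pi) * ∫ θ in (0:ℝ)..Real.pi, g θ := by
    rw [calI, hg]
    norm_num
  refine ⟨?_, hmain, ?_⟩
  · rw [hcast]
    positivity
  · intro hB0
    subst hB0
    have : (∫ θ in (0:ℝ)..Real.pi, g θ) = 0 := by
      have hgθ : ∀ θ, g θ = fermi 2 A * Real.cos (2 * θ) := by
        intro θ
        rw [hg]
        norm_num [mul_comm]
      calc (∫ θ in (0:ℝ)..Real.pi, g θ)
          = ∫ θ in (0:ℝ)..Real.pi, fermi 2 A * Real.cos (2 * θ) := by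
            apply intervalIntegral.integral_congr
            intro θ _
            exact hgθ θ
        _ = fermi 2 A * ∫ θ in (0:ℝ)..Real.pi, Real.cos (2 * θ) := by
            rw [intervalIntegral.integral_const_mul]
        _ = 0 := by
            rw [intervalIntegral.integral_comp_mul_left (fun y => Real.cos y)
              (two_ne_zero)]
            norm_num [Real.sin_two_pi]
    rw [hcast, this, mul_zero]
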